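/- arXiv:2501.13664 — 6 statements merged into one kernel-verified Lean document; each statement's English description precedes it below -/
import Mathlib

section
/- Consecutive steps of a discrete line differ by at most 1: for all n ≥ 1, s ∈ {0,...,2^n-1}, and integers 0 ≤ k < 2^n - 1, |L^n_s(k+1) - L^n_s(k)| ≤ 1 and L^n_s(k+1) ≥ L^n_s(k), where L^n_s(k) = l^n_s(bits(k)) and bits(k) is the binary expansion of k (least significant bit first). -/
open Finset

/-- Closed-form discrete line `l^n_s(u₀,…,u_{n-1}) = Σ_{i<n} u_{n-1-i}·⌊(⌊s/2^i⌋+1)/2⌋`. -/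
def dline (n s : ℕ) (u : ℕ → ℕ) : ℕ :=
  ∑ i ∈ Finset.range n, u (n - 1 - i) * ((s / 2 ^ i + 1) / 2)

/-- `i`-th binary digit of `k` (least significant first). -/
def bit (k i : ℕ) : ℕ := k / 2 ^ i % 2

/-- Discrete line applied to the binary digits of `k`. -/
def Lline (n s k : ℕ) : ℕ := dline n s (bit k)

lemma Lline_rec (n s k : ℕ) :
    Lline (n + 1) s k = Lline n s (k / 2) + k % 2 * ((s / 2 ^ n + 1) / 2) := by
  unfold Lline dline
  rw [Finset.sum_range_succ]
  congr 1
  · refine Finset.sum_congr rfl fun i hi => ?_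
    rw [Finset.mem_range] at hi
    have h1 : n + 1 - 1 - i = (n - 1 - i) + 1 := by omega
    rw [h1]
    congr 1
    show k / 2 ^ ((n - 1 - i) + 1) % 2 = (k / 2) / 2 ^ (n - 1 - i) % 2
    rw [pow_succ, ← Nat.div_div_eq_div_mul, Nat.div_div_eq_div_mul,
      Nat.div_div_eq_div_mul, Nat.mul_comm]
  · have h2 : n + 1 - 1 - n = 0 := by omega
    rw [h2]
    show k / 2 ^ 0 % 2 * _ = _
    simp

lemma Lline_step : ∀ n s k : ℕ, k < 2 ^ n - 1 →
    Lline n s k + s / 2 ^ n ≤ Lline n s (k + 1) ∧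
      Lline n s (k + 1) ≤ Lline n s k + s / 2 ^ n + 1 := by
  intro n
  induction n with
  | zero => intro s k hk; simp at hk
  | succ n ih =>
    intro s k hk
    have hpow : 1 ≤ 2 ^ n := Nat.one_le_two_pow
    have hT : s / 2 ^ (n + 1) = (s / 2 ^ n) / 2 := by
      rw [pow_succ, Nat.div_div_eq_div_mul]
    rw [Lline_rec, Lline_rec, hT]
    rcases Nat.even_or_odd k with ⟨q, hq⟩ | ⟨q, hq⟩
    · have h1 : k / 2 = q := by omega
      have h2 : (k + 1) / 2 = q := by omega
      have h3 : k % 2 = 0 := by omega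
      have h4 : (k + 1) % 2 = 1 := by omega
      rw [h1, h2, h3, h4]
      omega
    · have h1 : k / 2 = q := by omega
      have h2 : (k + 1) / 2 = q + 1 := by omega
      have h3 : k % 2 = 1 := by omega
      have h4 : (k + 1) % 2 = 0 := by omega
      rw [h1, h2, h3, h4]
      have hq' : q < 2 ^ n - 1 := by
        have : 2 ^ (n + 1) = 2 * 2 ^ n := by ring
        omega
      have := ih s q hq'
      omega

theorem dline_unit_steps :
    ∀ n : ℕ, 1 ≤ n → ∀ s : ℕ, s ≤ 2 ^ n - 1 → ∀ k : ℕ, k < 2 ^ n - 1 →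
      Lline n s k ≤ Lline n s (k + 1) ∧ Lline n s (k + 1) ≤ Lline n s k + 1 := by
  intro n hn s hs k hk
  have hpow : 1 ≤ 2 ^ n := Nat.one_le_two_pow
  have h0 : s / 2 ^ n = 0 := Nat.div_eq_of_lt (by omega)
  have := Lline_step n s k hk
  omega
end

section
/- The two-scale splitting property of discrete lines: for all n ≥ 1, s ∈ {0,...,2^n-1}, and u ∈ {0,1}^n with most significant bit u_{n-1}, l^n_s(u_0,...,u_{n-1}) = l^{n-1}_{⌊s/2⌋}(u_0,...,u_{n-2}) + u_{n-1}·(⌊s/2⌋ + s mod 2). Equivalently, a discrete line of length 2^n with slope s restricted to its second half equals a discrete line of length 2^{n-1} with slope ⌊s/2⌋ shifted by ⌊s/2⌋ + (s mod 2). -/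
open Finset

theorem dline_two_scale_split :
    ∀ n : ℕ, 1 ≤ n → ∀ s : ℕ, s ≤ 2 ^ n - 1 → ∀ u : ℕ → ℕ, (∀ i, u i ≤ 1) →
      dline n s u = dline (n - 1) (s / 2) u + u (n - 1) * (s / 2 + s % 2) := by
  rintro (_ | m) hn s hs u hu
  · omega
  · simp only [dline, Nat.add_sub_cancel]
    rw [Finset.sum_range_succ']
    congr 1
    · apply Finset.sum_congr rfl
      intro i _
      have h1 : m - (i + 1) = m - 1 - i := by omega
      have h2 : s / 2 ^ (i + 1) = s / 2 / 2 ^ i := by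
        rw [pow_succ, Nat.div_div_eq_div_mul, mul_comm]
      rw [h1, h2]
    · have : (s / 2 ^ 0 + 1) / 2 = s / 2 + s % 2 := by simp; omega
      rw [this]
      simp
end

section
/- Correctness of the 2D DRT recursion: let N = 2^n and f : {0,...,N-1}² → ℤ (extended by zero outside). Define the partial transforms f^m(σ, v, d) = Σ_{u ∈ {0,1}^m} f(λ(u,v), l^m_{λ(σ)}(u) + d) for σ ∈ {0,1}^m, v ∈ {0,1}^{n-m}, d ∈ ℤ. Then the recursion f^{m+1}((s', σ), v, d) = f^m(σ, (0,v), d) + f^m(σ, (1,v), d + s' + λ(σ)) holds for all s' ∈ {0,1}, σ ∈ {0,1}^m, v ∈ {0,1}^{n-m-1}, d ∈ ℤ. -/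
open Finset

/-- Partial 2D DRT: `f^m(σ|v|d) = Σ_{u∈{0,1}^m} f(λ(u,v), l^m_{λ(σ)}(u)+d)`,
with slope `s = λ(σ)` and vertical block `v = λ(v)` given in decimal. -/
def pdrt (m : ℕ) (f : ℤ → ℤ → ℤ) (s v : ℕ) (d : ℤ) : ℤ :=
  ∑ u ∈ Finset.range (2 ^ m), f ((u : ℤ) + 2 ^ m * (v : ℤ)) ((Lline m s u : ℤ) + d)

lemma bit_add_pow (m u i : ℕ) (hi : i < m) : bit (2 ^ m + u) i = bit u i := by
  unfold bit
  have h : 2 ^ m = 2 ^ i * 2 ^ (m - i) := by rw [← pow_add]; congr 1; omega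
  rw [h, Nat.mul_add_div ((Nat.pow_pos (by norm_num) : 0 < 2 ^ i))]
  have h2 : 2 ^ (m - i) = 2 * 2 ^ (m - i - 1) := by
    rw [← pow_succ']; congr 1; omega
  rw [h2, Nat.mul_add_mod]

lemma dline_succ (m s' σ : ℕ) (hs' : s' ≤ 1) (u : ℕ → ℕ) :
    dline (m + 1) (s' + 2 * σ) u = dline m σ u + u m * (σ + s') := by
  unfold dline
  rw [Finset.sum_range_succ']
  congr 1
  · apply Finset.sum_congr rfl
    intro i _
    have h1 : m + 1 - 1 - (i + 1) = m - 1 - i := by omega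
    have h2 : (s' + 2 * σ) / 2 ^ (i + 1) = σ / 2 ^ i := by
      rw [pow_succ', ← Nat.div_div_eq_div_mul]
      congr 1
      omega
    rw [h1, h2]
  · simp only [pow_zero, Nat.div_one, Nat.add_sub_cancel]
    congr 1
    omega

lemma Lline_low (m s' σ u : ℕ) (hs' : s' ≤ 1) (hu : u < 2 ^ m) :
    Lline (m + 1) (s' + 2 * σ) u = Lline m σ u := by
  unfold Lline
  rw [dline_succ m s' σ hs']
  have : bit u m = 0 := by unfold bit; rw [Nat.div_eq_of_lt hu]
  simp [this]

lemma Lline_high (m s' σ u : ℕ) (hs' : s' ≤ 1) (hu : u < 2 ^ m) :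
    Lline (m + 1) (s' + 2 * σ) (2 ^ m + u) = Lline m σ u + σ + s' := by
  unfold Lline
  rw [dline_succ m s' σ hs']
  have h1 : bit (2 ^ m + u) m = 1 := by
    unfold bit
    rw [Nat.add_comm, Nat.add_div_right u ((Nat.pow_pos (by norm_num) : 0 < 2 ^ m)),
      Nat.div_eq_of_lt hu]
  have h2 : dline m σ (bit (2 ^ m + u)) = dline m σ (bit u) := by
    unfold dline
    apply Finset.sum_congr rfl
    intro i hi
    rw [bit_add_pow m u (m - 1 - i) (by simp at hi; omega)]
  rw [h2, h1]
  ring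

theorem drt2_recursion (n m : ℕ) (hm : m < n) (f : ℤ → ℤ → ℤ)
    (hf : ∀ x y : ℤ, x < 0 ∨ (2 : ℤ) ^ n ≤ x ∨ y < 0 ∨ (2 : ℤ) ^ n ≤ y → f x y = 0)
    (s' : ℕ) (hs' : s' ≤ 1) (σ : ℕ) (hσ : σ < 2 ^ m)
    (v : ℕ) (hv : v < 2 ^ (n - m - 1)) (d : ℤ) :
    pdrt (m + 1) f (s' + 2 * σ) v d =
      pdrt m f σ (2 * v) d + pdrt m f σ (2 * v + 1) (d + (s' : ℤ) + (σ : ℤ)) := by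
  unfold pdrt
  have h2 : 2 ^ (m + 1) = 2 ^ m + 2 ^ m := by ring
  rw [h2, Finset.sum_range_add]
  congr 1
  · apply Finset.sum_congr rfl
    intro u hu
    simp only [Finset.mem_range] at hu
    rw [Lline_low m s' σ u hs' hu]
    congr 1
    push_cast
    ring
  · apply Finset.sum_congr rfl
    intro u hu
    simp only [Finset.mem_range] at hu
    rw [Lline_high m s' σ u hs' hu]
    congr 1
    · push_cast; ring
    · push_cast; ring
end

section
/- Correctness of the 3D DRT (planes) recursion: let N = 2^n and f : {0,...,N-1}³ → ℤ extended by zero. Define f^m(σ₁, v₁, σ₂, v₂, d) = Σ_{u₁ ∈ {0,1}^m} Σ_{u₂ ∈ {0,1}^m} f(λ(u₁,v₁), λ(u₂,v₂), l^m_{λ(σ₁)}(u₁) + l^m_{λ(σ₂)}(u₂) + d). Then f^{m+1}((s₁,σ₁), v₁, (s₂,σ₂), v₂, d) = Σ_{a,b ∈ {0,1}} f^m(σ₁, (a,v₁), σ₂, (b,v₂), d + a·(s₁+λ(σ₁)) + b·(s₂+λ(σ₂))) for all bits s₁, s₂ and all valid σ₁, σ₂, v₁, v₂, d. -/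
open Finset

/-- Partial 3D DRT of planes:
`f^m(σ₁|v₁|σ₂|v₂|d) = Σ_{u₁,u₂∈{0,1}^m} f(λ(u₁,v₁), λ(u₂,v₂), l^m_{λ(σ₁)}(u₁)+l^m_{λ(σ₂)}(u₂)+d)`,
with slopes and block indices in decimal. -/
def pdrt3 (m : ℕ) (f : ℤ → ℤ → ℤ → ℤ) (s₁ v₁ s₂ v₂ : ℕ) (d : ℤ) : ℤ :=
  ∑ u₁ ∈ Finset.range (2 ^ m), ∑ u₂ ∈ Finset.range (2 ^ m),
    f ((u₁ : ℤ) + 2 ^ m * (v₁ : ℤ)) ((u₂ : ℤ) + 2 ^ m * (v₂ : ℤ))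
      ((Lline m s₁ u₁ : ℤ) + (Lline m s₂ u₂ : ℤ) + d)

lemma bit_mod (u m j : ℕ) (h : j < m) : bit (u % 2^m) j = bit u j := by
  unfold bit
  conv_rhs => rw [← Nat.mod_add_div u (2^m)]
  have h2 : (2:ℕ)^m = 2^j * 2^(m-j) := by rw [← pow_add]; congr 1; omega
  obtain ⟨c, hc⟩ : (2:ℕ) ∣ 2^(m-j) := dvd_pow_self 2 (by omega)
  rw [h2, mul_assoc, Nat.add_mul_div_left _ _ (pow_pos two_pos j), hc, mul_assoc]
  omega

lemma Lline_split (m s σ u a : ℕ) (hs : s ≤ 1) (hu : u < 2^m) (ha : a < 2) :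
    Lline (m+1) (s + 2*σ) (u + 2^m * a) = Lline m σ u + a * (s + σ) := by
  unfold Lline dline
  rw [Finset.sum_range_succ']
  have hbitm : bit (u + 2^m * a) (m+1-1-0) = a := by
    unfold bit
    simp only [Nat.add_sub_cancel, Nat.sub_zero]
    rw [Nat.add_mul_div_left _ _ (pow_pos two_pos m), Nat.div_eq_of_lt hu]
    omega
  have hd0 : ((s + 2*σ) / 2^0 + 1) / 2 = s + σ := by simp; omega
  rw [hbitm, hd0]
  congr 1
  apply Finset.sum_congr rfl
  intro i hi
  simp only [Finset.mem_range] at hi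
  have hidx : m + 1 - 1 - (i+1) = m - 1 - i := by omega
  have hb : bit (u + 2^m * a) (m - 1 - i) = bit u (m - 1 - i) := by
    rw [← bit_mod (u + 2^m*a) m (m-1-i) (by omega), Nat.add_mul_mod_self_left,
      Nat.mod_eq_of_lt hu]
  have hdiv : (s + 2*σ) / 2^(i+1) = σ / 2^i := by
    rw [pow_succ', ← Nat.div_div_eq_div_mul]
    congr 1
    omega
  rw [hidx, hb, hdiv]

theorem drt3_recursion (n m : ℕ) (hm : m < n) (f : ℤ → ℤ → ℤ → ℤ)
    (hf : ∀ x y z : ℤ,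
      x < 0 ∨ (2 : ℤ) ^ n ≤ x ∨ y < 0 ∨ (2 : ℤ) ^ n ≤ y ∨ z < 0 ∨ (2 : ℤ) ^ n ≤ z →
      f x y z = 0)
    (s₁ : ℕ) (hs₁ : s₁ ≤ 1) (s₂ : ℕ) (hs₂ : s₂ ≤ 1)
    (σ₁ : ℕ) (hσ₁ : σ₁ < 2 ^ m) (σ₂ : ℕ) (hσ₂ : σ₂ < 2 ^ m)
    (v₁ : ℕ) (hv₁ : v₁ < 2 ^ (n - m - 1)) (v₂ : ℕ) (hv₂ : v₂ < 2 ^ (n - m - 1)) (d : ℤ) :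
    pdrt3 (m + 1) f (s₁ + 2 * σ₁) v₁ (s₂ + 2 * σ₂) v₂ d =
      ∑ a ∈ Finset.range 2, ∑ b ∈ Finset.range 2,
        pdrt3 m f σ₁ (a + 2 * v₁) σ₂ (b + 2 * v₂)
          (d + (a : ℤ) * ((s₁ : ℤ) + (σ₁ : ℤ)) + (b : ℤ) * ((s₂ : ℤ) + (σ₂ : ℤ))) := by
  have split : ∀ (F : ℕ → ℤ), ∑ u ∈ Finset.range (2^(m+1)), F u
      = ∑ a ∈ Finset.range 2, ∑ u ∈ Finset.range (2^m), F (u + 2^m * a) := by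
    intro F
    rw [show (2:ℕ)^(m+1) = 2^m + 2^m by ring, Finset.sum_range_add,
      Finset.sum_range_succ, Finset.sum_range_succ, Finset.sum_range_zero]
    simp [Nat.add_comm]
  unfold pdrt3
  rw [split]
  apply Finset.sum_congr rfl
  intro a ha
  simp only [Finset.mem_range] at ha
  rw [Finset.sum_congr rfl (fun u₁ _ => split _), Finset.sum_comm]
  apply Finset.sum_congr rfl
  intro b hb
  simp only [Finset.mem_range] at hb
  apply Finset.sum_congr rfl
  intro u₁ hu₁
  simp only [Finset.mem_range] at hu₁
  apply Finset.sum_congr rfl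
  intro u₂ hu₂
  simp only [Finset.mem_range] at hu₂
  have e1 : ((u₁ + 2^m*a : ℕ) : ℤ) + 2^(m+1)*(v₁:ℤ)
      = (u₁:ℤ) + 2^m * ((a + 2*v₁ : ℕ) : ℤ) := by push_cast; ring
  have e2 : ((u₂ + 2^m*b : ℕ) : ℤ) + 2^(m+1)*(v₂:ℤ)
      = (u₂:ℤ) + 2^m * ((b + 2*v₂ : ℕ) : ℤ) := by push_cast; ring
  have e3 : ((Lline (m+1) (s₁+2*σ₁) (u₁+2^m*a) : ℕ) : ℤ)
        + ((Lline (m+1) (s₂+2*σ₂) (u₂+2^m*b) : ℕ) : ℤ) + d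
      = ((Lline m σ₁ u₁ : ℕ) : ℤ) + ((Lline m σ₂ u₂ : ℕ) : ℤ)
        + (d + (a:ℤ)*((s₁:ℤ)+(σ₁:ℤ)) + (b:ℤ)*((s₂:ℤ)+(σ₂:ℤ))) := by
    rw [Lline_split m s₁ σ₁ u₁ a hs₁ hu₁ ha, Lline_split m s₂ σ₂ u₂ b hs₂ hu₂ hb]
    push_cast; ring
  rw [e1, e2, e3]
end

section
/- The final stage of the 3D DRT of planes computes discrete plane sums: with N = 2^n and f : {0,...,N-1}³ → ℤ extended by zero, f^n(s₁, s₂, d) = Σ_{x=0}^{N-1} Σ_{y=0}^{N-1} f(x, y, L^n_{s₁}(x) + L^n_{s₂}(y) + d) for all slopes s₁, s₂ ∈ {0,...,N-1} and all displacements d, where L^n_s(k) applies the discrete line function to the binary digits of k. -/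
open Finset

/-- The iterative multiscale 3D DRT of planes: stage 0 reads the input, each stage applies
the four-term two-scale recursion, with slopes and block indices in decimal. -/
def drt3Stage (f : ℤ → ℤ → ℤ → ℤ) : ℕ → ℕ → ℕ → ℕ → ℕ → ℤ → ℤ
  | 0, _, v₁, _, v₂, d => f (v₁ : ℤ) (v₂ : ℤ) d
  | m + 1, s₁, v₁, s₂, v₂, d =>
      drt3Stage f m (s₁ / 2) (2 * v₁) (s₂ / 2) (2 * v₂) d +
      drt3Stage f m (s₁ / 2) (2 * v₁ + 1) (s₂ / 2) (2 * v₂)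
        (d + (s₁ % 2 : ℤ) + (s₁ / 2 : ℤ)) +
      drt3Stage f m (s₁ / 2) (2 * v₁) (s₂ / 2) (2 * v₂ + 1)
        (d + (s₂ % 2 : ℤ) + (s₂ / 2 : ℤ)) +
      drt3Stage f m (s₁ / 2) (2 * v₁ + 1) (s₂ / 2) (2 * v₂ + 1)
        (d + (s₁ % 2 : ℤ) + (s₁ / 2 : ℤ) + (s₂ % 2 : ℤ) + (s₂ / 2 : ℤ))

lemma bit_low (m b u j : ℕ) (hj : j < m) :
    bit (2 ^ m * b + u) j = bit u j := by
  unfold bit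
  have h : 2 ^ m * b = 2 ^ j * (2 ^ (m - j) * b) := by
    rw [← mul_assoc, ← pow_add]
    congr 2
    omega
  rw [h, add_comm, Nat.add_mul_div_left _ _ (pow_pos (by norm_num : (0:ℕ) < 2) j)]
  have h2 : 2 ∣ 2 ^ (m - j) * b := by
    have : m - j ≠ 0 := by omega
    exact Dvd.dvd.mul_right (dvd_pow_self 2 this) b
  omega

lemma bit_high (m b u : ℕ) (hu : u < 2 ^ m) (hb : b < 2) :
    bit (2 ^ m * b + u) m = b := by
  unfold bit
  rw [add_comm, Nat.add_mul_div_left _ _ (pow_pos (by norm_num : (0:ℕ) < 2) m),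
    Nat.div_eq_of_lt hu]
  omega

lemma Lline_succ (m s b u : ℕ) (hu : u < 2 ^ m) (hb : b < 2) :
    Lline (m + 1) s (2 ^ m * b + u) = b * ((s + 1) / 2) + Lline m (s / 2) u := by
  unfold Lline dline
  rw [Finset.sum_range_succ']
  simp only [Nat.add_sub_cancel, Nat.sub_zero, pow_zero, Nat.div_one]
  rw [bit_high m b u hu hb, add_comm]
  congr 1
  apply Finset.sum_congr rfl
  intro i hi
  simp only [Finset.mem_range] at hi
  have h1 : m - (i + 1) = m - 1 - i := by omega
  have h2 : bit (2 ^ m * b + u) (m - 1 - i) = bit u (m - 1 - i) :=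
    bit_low m b u _ (by omega)
  have h3 : s / 2 ^ (i + 1) = s / 2 / 2 ^ i := by
    rw [Nat.div_div_eq_div_mul, pow_succ, mul_comm (2 ^ i) 2]
  rw [h1, h2, h3]

lemma Lline_zero_bit (m s u : ℕ) (hu : u < 2 ^ m) :
    Lline (m + 1) s u = Lline m (s / 2) u := by
  have := Lline_succ m s 0 u hu (by norm_num)
  simpa using this

lemma Lline_one_bit (m s u : ℕ) (hu : u < 2 ^ m) :
    Lline (m + 1) s (2 ^ m + u) = (s + 1) / 2 + Lline m (s / 2) u := by
  have := Lline_succ m s 1 u hu (by norm_num)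
  simpa using this

lemma half_cast (s : ℕ) : ((s % 2 : ℕ) : ℤ) + ((s / 2 : ℕ) : ℤ) = (((s + 1) / 2 : ℕ) : ℤ) := by
  have : s % 2 + s / 2 = (s + 1) / 2 := by omega
  push_cast [← this]
  ring

lemma drt3_main (f : ℤ → ℤ → ℤ → ℤ) (m : ℕ) :
    ∀ s₁ v₁ s₂ v₂ d, drt3Stage f m s₁ v₁ s₂ v₂ d =
      ∑ u₁ ∈ Finset.range (2 ^ m), ∑ u₂ ∈ Finset.range (2 ^ m),
        f ((2 ^ m * v₁ + u₁ : ℕ) : ℤ) ((2 ^ m * v₂ + u₂ : ℕ) : ℤ)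
          ((Lline m s₁ u₁ : ℤ) + (Lline m s₂ u₂ : ℤ) + d) := by
  induction m with
  | zero =>
    intro s₁ v₁ s₂ v₂ d
    simp [drt3Stage, Lline, dline]
  | succ m ih =>
    intro s₁ v₁ s₂ v₂ d
    have hpow : (2 : ℕ) ^ (m + 1) = 2 ^ m + 2 ^ m := by ring
    rw [drt3Stage, ih, ih, ih, ih, hpow]
    rw [Finset.sum_range_add]
    simp only [Finset.sum_range_add (fun u₂ => _) (2 ^ m) (2 ^ m)]
    rw [Finset.sum_add_distrib, Finset.sum_add_distrib]
    have key : ∀ b₁ b₂ : ℕ, b₁ < 2 → b₂ < 2 → ∀ D : ℤ,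
        D = d + (b₁ : ℤ) * (((s₁ + 1) / 2 : ℕ) : ℤ) + (b₂ : ℤ) * (((s₂ + 1) / 2 : ℕ) : ℤ) →
        (∑ u₁ ∈ Finset.range (2 ^ m), ∑ u₂ ∈ Finset.range (2 ^ m),
          f ((2 ^ m * (2 * v₁ + b₁) + u₁ : ℕ) : ℤ) ((2 ^ m * (2 * v₂ + b₂) + u₂ : ℕ) : ℤ)
            ((Lline m (s₁ / 2) u₁ : ℤ) + (Lline m (s₂ / 2) u₂ : ℤ) + D)) =
        (∑ u₁ ∈ Finset.range (2 ^ m), ∑ u₂ ∈ Finset.range (2 ^ m),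
          f (((2 ^ m + 2 ^ m) * v₁ + (2 ^ m * b₁ + u₁) : ℕ) : ℤ)
            (((2 ^ m + 2 ^ m) * v₂ + (2 ^ m * b₂ + u₂) : ℕ) : ℤ)
            ((Lline (m + 1) s₁ (2 ^ m * b₁ + u₁) : ℤ) +
              (Lline (m + 1) s₂ (2 ^ m * b₂ + u₂) : ℤ) + d)) := by
      intro b₁ b₂ hb₁ hb₂ D hD
      apply Finset.sum_congr rfl
      intro u₁ hu₁
      apply Finset.sum_congr rfl
      intro u₂ hu₂
      simp only [Finset.mem_range] at hu₁ hu₂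
      rw [Lline_succ m s₁ b₁ u₁ hu₁ hb₁, Lline_succ m s₂ b₂ u₂ hu₂ hb₂]
      have e1 : (2 ^ m + 2 ^ m) * v₁ + (2 ^ m * b₁ + u₁) = 2 ^ m * (2 * v₁ + b₁) + u₁ := by
        ring
      have e2 : (2 ^ m + 2 ^ m) * v₂ + (2 ^ m * b₂ + u₂) = 2 ^ m * (2 * v₂ + b₂) + u₂ := by
        ring
      rw [e1, e2, hD]
      congr 1
      push_cast
      ring
    have h00 := key 0 0 (by norm_num) (by norm_num) d (by push_cast; ring)
    have h10 := key 1 0 (by norm_num) (by norm_num) (d + (s₁ % 2 : ℤ) + (s₁ / 2 : ℤ)) (by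
      have h : s₁ % 2 + s₁ / 2 = (s₁ + 1) / 2 := by omega
      push_cast [← h]; ring)
    have h01 := key 0 1 (by norm_num) (by norm_num) (d + (s₂ % 2 : ℤ) + (s₂ / 2 : ℤ)) (by
      have h : s₂ % 2 + s₂ / 2 = (s₂ + 1) / 2 := by omega
      push_cast [← h]; ring)
    have h11 := key 1 1 (by norm_num) (by norm_num)
        (d + (s₁ % 2 : ℤ) + (s₁ / 2 : ℤ) + (s₂ % 2 : ℤ) + (s₂ / 2 : ℤ)) (by
      have h1 : s₁ % 2 + s₁ / 2 = (s₁ + 1) / 2 := by omega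
      have h2 : s₂ % 2 + s₂ / 2 = (s₂ + 1) / 2 := by omega
      push_cast [← h1, ← h2]; ring)
    simp only [Nat.add_zero, Nat.mul_zero, Nat.mul_one, Nat.zero_add] at h00 h10 h01 h11
    rw [h00, h10, h01, h11]
    ring

theorem drt3_final_stage (n : ℕ) (f : ℤ → ℤ → ℤ → ℤ)
    (hf : ∀ x y z : ℤ,
      x < 0 ∨ (2 : ℤ) ^ n ≤ x ∨ y < 0 ∨ (2 : ℤ) ^ n ≤ y ∨ z < 0 ∨ (2 : ℤ) ^ n ≤ z →
      f x y z = 0)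
    (s₁ : ℕ) (hs₁ : s₁ < 2 ^ n) (s₂ : ℕ) (hs₂ : s₂ < 2 ^ n) (d : ℤ) :
    drt3Stage f n s₁ 0 s₂ 0 d =
      ∑ x ∈ Finset.range (2 ^ n), ∑ y ∈ Finset.range (2 ^ n),
        f (x : ℤ) (y : ℤ) ((Lline n s₁ x : ℤ) + (Lline n s₂ y : ℤ) + d) := by
  rw [drt3_main f n s₁ 0 s₂ 0 d]
  simp
end

section
/- Adjointness of the backprojection recursion for the 3D DJT: the linear map taking the family (f^m) to (f^{m+1}) defined by f^{m+1}(v, (s₁,σ₁), (s₂,σ₂), d₁, d₂) = f^m((0,v), σ₁, σ₂, d₁, d₂) + f^m((1,v), σ₁, σ₂, d₁+s₁+λ(σ₁), d₂+s₂+λ(σ₂)) has adjoint (with respect to the standard inner product on finitely-supported integer/real arrays) given by g^m((a,v), σ₁, σ₂, d₁, d₂) = Σ_{s₁,s₂ ∈ {0,1}} g^{m+1}(v, (s₁,σ₁), (s₂,σ₂), d₁ - a·(s₁+λ(σ₁)), d₂ - a·(s₂+λ(σ₂))), i.e., ⟨T f, g⟩ = ⟨f, T* g⟩ for all finitely supported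 f, g. -/
open Finset

/-- Single-stage forward map `T` of the 3D discrete John transform (indices in decimal:
`(v, S₁, S₂, d₁, d₂)` with new slope bits the least significant bits of `S₁, S₂`):
`(Tf)(v,(s₁,σ₁),(s₂,σ₂),d₁,d₂) = f((0,v),σ₁,σ₂,d₁,d₂) + f((1,v),σ₁,σ₂,d₁+s₁+λσ₁,d₂+s₂+λσ₂)`. -/
def Tjohn (f : ℕ × ℕ × ℕ × ℤ × ℤ → ℝ) : ℕ × ℕ × ℕ × ℤ × ℤ → ℝ :=
  fun p =>
    f (2 * p.1, p.2.1 / 2, p.2.2.1 / 2, p.2.2.2.1, p.2.2.2.2) +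
    f (2 * p.1 + 1, p.2.1 / 2, p.2.2.1 / 2,
       p.2.2.2.1 + (p.2.1 % 2 : ℕ) + (p.2.1 / 2 : ℕ),
       p.2.2.2.2 + (p.2.2.1 % 2 : ℕ) + (p.2.2.1 / 2 : ℕ))

/-- The backprojection (adjoint) map `T*` of the 3D DJT:
`(T*g)((a,v),σ₁,σ₂,d₁,d₂) = Σ_{s₁,s₂∈{0,1}} g(v,(s₁,σ₁),(s₂,σ₂),d₁-a(s₁+λσ₁),d₂-a(s₂+λσ₂))`. -/
def TjohnAdj (g : ℕ × ℕ × ℕ × ℤ × ℤ → ℝ) : ℕ × ℕ × ℕ × ℤ × ℤ → ℝ :=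
  fun p =>
    ∑ s₁ ∈ Finset.range 2, ∑ s₂ ∈ Finset.range 2,
      g (p.1 / 2, s₁ + 2 * p.2.1, s₂ + 2 * p.2.2.1,
         p.2.2.2.1 - (p.1 % 2 : ℕ) * ((s₁ : ℤ) + (p.2.1 : ℤ)),
         p.2.2.2.2 - (p.1 % 2 : ℕ) * ((s₂ : ℤ) + (p.2.2.1 : ℤ)))

/-- Even branch of the forward map index. -/
def TL0 (p : ℕ × ℕ × ℕ × ℤ × ℤ) : ℕ × ℕ × ℕ × ℤ × ℤ :=
  (2 * p.1, p.2.1 / 2, p.2.2.1 / 2, p.2.2.2.1, p.2.2.2.2)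

/-- Odd branch of the forward map index. -/
def TL1 (p : ℕ × ℕ × ℕ × ℤ × ℤ) : ℕ × ℕ × ℕ × ℤ × ℤ :=
  (2 * p.1 + 1, p.2.1 / 2, p.2.2.1 / 2,
    p.2.2.2.1 + (p.2.1 % 2 : ℕ) + (p.2.1 / 2 : ℕ),
    p.2.2.2.2 + (p.2.2.1 % 2 : ℕ) + (p.2.2.1 / 2 : ℕ))

/-- Index map of the backprojection. -/
def TB (s₁ s₂ : ℕ) (q : ℕ × ℕ × ℕ × ℤ × ℤ) : ℕ × ℕ × ℕ × ℤ × ℤ :=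
  (q.1 / 2, s₁ + 2 * q.2.1, s₂ + 2 * q.2.2.1,
    q.2.2.2.1 - (q.1 % 2 : ℕ) * ((s₁ : ℤ) + (q.2.1 : ℤ)),
    q.2.2.2.2 - (q.1 % 2 : ℕ) * ((s₂ : ℤ) + (q.2.2.1 : ℤ)))

lemma Tjohn_eq (f : ℕ × ℕ × ℕ × ℤ × ℤ → ℝ) (p : ℕ × ℕ × ℕ × ℤ × ℤ) :
    Tjohn f p = f (TL0 p) + f (TL1 p) := rfl

lemma TjohnAdj_eq (g : ℕ × ℕ × ℕ × ℤ × ℤ → ℝ) (q : ℕ × ℕ × ℕ × ℤ × ℤ) :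
    TjohnAdj g q = ∑ s₁ ∈ Finset.range 2, ∑ s₂ ∈ Finset.range 2, g (TB s₁ s₂ q) := rfl

lemma pick {F : Finset (ℕ × ℕ × ℕ × ℤ × ℤ)} {f : ℕ × ℕ × ℕ × ℤ × ℤ → ℝ}
    (hf : ∀ x, x ∉ F → f x = 0) (x : ℕ × ℕ × ℕ × ℤ × ℤ) (c : ℝ) :
    f x * c = ∑ q ∈ F, (if x = q then (1 : ℝ) else 0) * (f q * c) := by
  classical
  have h : ∀ q, (if x = q then (1 : ℝ) else 0) * (f q * c) = if x = q then f q * c else 0 := by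
    intro q; split <;> simp
  rw [Finset.sum_congr rfl fun q _ => h q, Finset.sum_ite_eq]
  split
  · rfl
  · rw [hf x ‹_›, zero_mul]

lemma djt3_key (p q : ℕ × ℕ × ℕ × ℤ × ℤ) :
    ((if TL0 p = q then (1 : ℝ) else 0) + (if TL1 p = q then (1 : ℝ) else 0)) =
      ∑ s₁ ∈ Finset.range 2, ∑ s₂ ∈ Finset.range 2,
        (if TB s₁ s₂ q = p then (1 : ℝ) else 0) := by
  obtain ⟨v, S₁, S₂, d₁, d₂⟩ := p
  obtain ⟨n, σ₁, σ₂, e₁, e₂⟩ := q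
  simp only [TL0, TL1, TB, Finset.sum_range_succ, Finset.sum_range_zero, zero_add,
    Prod.mk.injEq]
  rcases Nat.mod_two_eq_zero_or_one n with h | h <;>
    simp only [h, Nat.cast_zero, Nat.cast_one, Nat.cast_ofNat, zero_mul, one_mul,
      sub_zero] <;>
    split_ifs <;> norm_num <;> omega

theorem djt3_adjointness (f g : ℕ × ℕ × ℕ × ℤ × ℤ → ℝ)
    (hf : (Function.support f).Finite) (hg : (Function.support g).Finite) :
    ∑ᶠ p : ℕ × ℕ × ℕ × ℤ × ℤ, Tjohn f p * g p =
      ∑ᶠ p : ℕ × ℕ × ℕ × ℤ × ℤ, f p * TjohnAdj g p := by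
  classical
  set F := hf.toFinset with hF
  set G := hg.toFinset with hG
  have hfz : ∀ x, x ∉ F → f x = 0 := by
    intro x hx
    by_contra h
    exact hx (hf.mem_toFinset.mpr h)
  have hgz : ∀ x, x ∉ G → g x = 0 := by
    intro x hx
    by_contra h
    exact hx (hg.mem_toFinset.mpr h)
  have h1 : Function.support (fun p => Tjohn f p * g p) ⊆ ↑G := by
    intro p hp
    simp only [Function.mem_support] at hp
    by_contra hc
    exact hp (by rw [hgz p (by simpa using hc), mul_zero])
  have h2 : Function.support (fun q => f q * TjohnAdj g q) ⊆ ↑F := by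
    intro q hq
    simp only [Function.mem_support] at hq
    by_contra hc
    exact hq (by rw [hfz q (by simpa using hc), zero_mul])
  rw [finsum_eq_sum_of_support_subset _ h1, finsum_eq_sum_of_support_subset _ h2]
  calc ∑ p ∈ G, Tjohn f p * g p
      = ∑ p ∈ G, ∑ q ∈ F,
          ((if TL0 p = q then (1 : ℝ) else 0) + (if TL1 p = q then (1 : ℝ) else 0))
            * (f q * g p) := by
        refine Finset.sum_congr rfl fun p _ => ?_
        rw [Tjohn_eq, add_mul, pick hfz (TL0 p) (g p), pick hfz (TL1 p) (g p),
          ← Finset.sum_add_distrib]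
        exact Finset.sum_congr rfl fun q _ => by ring
    _ = ∑ q ∈ F, ∑ p ∈ G,
          (∑ s₁ ∈ Finset.range 2, ∑ s₂ ∈ Finset.range 2,
            (if TB s₁ s₂ q = p then (1 : ℝ) else 0)) * (f q * g p) := by
        rw [Finset.sum_comm]
        exact Finset.sum_congr rfl fun q _ => Finset.sum_congr rfl fun p _ => by
          rw [djt3_key p q]
    _ = ∑ q ∈ F, f q * TjohnAdj g q := by
        refine Finset.sum_congr rfl fun q _ => ?_
        rw [TjohnAdj_eq]
        simp only [Finset.mul_sum, Finset.sum_mul]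
        trans (∑ s₁ ∈ Finset.range 2, ∑ s₂ ∈ Finset.range 2, ∑ p ∈ G,
          (if TB s₁ s₂ q = p then (1 : ℝ) else 0) * (f q * g p))
        · rw [Finset.sum_comm]
          exact Finset.sum_congr rfl fun s₁ _ => Finset.sum_comm
        · refine Finset.sum_congr rfl fun s₁ _ => Finset.sum_congr rfl fun s₂ _ => ?_
          rw [mul_comm (f q) (g (TB s₁ s₂ q)), pick hgz (TB s₁ s₂ q) (f q)]
          exact Finset.sum_congr rfl fun p _ => by ring
end
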